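/- A linear code C ⊆ Fⁿ over F = F_{2^f} is doubly-even (∑ᵢ cᵢ = 0 and ∑_{i<j} cᵢcⱼ = 0 for all c ∈ C) if and only if Φ(c) = 0 for all c ∈ C, where Φ(c) = ∑ᵢ φ(cᵢ) ∈ ℤ/4ℤ and φ is the mod-4 weight with respect to a self-complementary basis. -/

import Mathlib

open Finset


private def q24 : ZMod 2 →+ ZMod 4 :=
  AddMonoidHom.mk' (fun u => 2 * (u.val : ZMod 4)) (by decide)

private lemma q24_eq_zero_iff (u : ZMod 2) : q24 u = 0 ↔ u = 0 := by revert u; decide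

private lemma val_add_zmod (u v : ZMod 2) :
    (((u + v).val : ℕ) : ZMod 4) = (u.val : ZMod 4) + (v.val : ZMod 4) + q24 (u * v) := by
  revert u v; decide

section Aux

variable {F : Type*} [Field F] [Fintype F] [Algebra (ZMod 2) F] {f : ℕ}
  (b : Module.Basis (Fin f) (ZMod 2) F)

private noncomputable def QF (F : Type*) [Field F] [Fintype F] [Algebra (ZMod 2) F] :
    F →+ ZMod 4 :=
  q24.comp (Algebra.trace (ZMod 2) F).toAddMonoidHom

private lemma QF_apply (x : F) :
    QF F x = q24 (Algebra.trace (ZMod 2) F x) := rfl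

variable (hb : ∀ i j, Algebra.trace (ZMod 2) F (b i * b j) = if i = j then 1 else 0)

include hb

private lemma trace_mul_basis (x : F) (i : Fin f) :
    Algebra.trace (ZMod 2) F (x * b i) = b.repr x i := by
  conv_lhs => rw [← b.sum_repr x]
  rw [Finset.sum_mul, map_sum]
  simp only [smul_mul_assoc, map_smul, hb, smul_eq_mul, mul_ite, mul_one, mul_zero]
  simp

private lemma trace_mul_eq (x y : F) :
    Algebra.trace (ZMod 2) F (x * y) = ∑ i, b.repr x i * b.repr y i := by
  conv_lhs => rw [← b.sum_repr y]
  rw [Finset.mul_sum, map_sum]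
  refine Finset.sum_congr rfl fun i _ => ?_
  rw [mul_smul_comm, map_smul, trace_mul_basis b hb, smul_eq_mul, mul_comm]

variable (φ : F → ZMod 4) (hφ : ∀ a, φ a = ∑ i, ((b.repr a i).val : ZMod 4))

include hφ

private lemma phi_zero : φ 0 = 0 := by simp [hφ]

private lemma phi_add (x y : F) : φ (x + y) = φ x + φ y + QF F (x * y) := by
  rw [hφ, hφ, hφ, QF_apply, trace_mul_eq b hb, map_sum q24, ← Finset.sum_add_distrib,
    ← Finset.sum_add_distrib]
  refine Finset.sum_congr rfl fun i _ => ?_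
  rw [map_add]
  exact val_add_zmod _ _

private lemma key_sum {n : ℕ} (c : Fin n → F) (s : Finset (Fin n)) :
    ∑ i ∈ s, φ (c i)
      = φ (∑ i ∈ s, c i)
        + ∑ i ∈ s, ∑ j ∈ s, if i < j then QF F (c i * c j) else 0 := by
  classical
  induction s using Finset.induction_on with
  | empty => simp [phi_zero b hb φ hφ]
  | @insert a s ha ih =>
    rw [Finset.sum_insert ha, Finset.sum_insert ha, ih, Finset.sum_insert ha,
      phi_add b hb φ hφ, Finset.sum_insert ha]
    have h1 : QF F (c a * ∑ j ∈ s, c j)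
        = ∑ j ∈ s, ((if a < j then QF F (c a * c j) else 0)
            + (if j < a then QF F (c j * c a) else 0)) := by
      rw [Finset.mul_sum, map_sum]
      refine Finset.sum_congr rfl fun j hj => ?_
      have hne : a ≠ j := fun h => ha (h ▸ hj)
      rcases hne.lt_or_gt with h | h
      · simp [h, not_lt.mpr h.le]
      · simp [h, not_lt.mpr h.le, mul_comm]
    have hq2 : ∀ z : F, QF F z * 2 = 0 := by
      intro z
      rw [QF_apply]
      generalize Algebra.trace (ZMod 2) F z = u
      revert u; decide
    have hzero : ∀ (t : Finset (Fin n)) (g : Fin n → ZMod 4),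
        (∀ x, g x = QF F (c a * c x) ∨ g x = QF F (c x * c a) ∨ g x = 0) →
        (∑ x ∈ t, g x) * 2 = 0 := by
      intro t g hg
      rw [Finset.sum_mul]
      apply Finset.sum_eq_zero
      intro x _
      rcases hg x with h | h | h <;> rw [h] <;> simp [hq2]
    simp only [Finset.sum_insert ha, lt_irrefl, if_false, zero_add, h1,
      Finset.sum_add_distrib]
    ring_nf
    rw [hzero _ _ (fun x => by split <;> simp), hzero _ _ (fun x => by split <;> simp),
      add_zero, add_zero]

end Aux

private lemma val_cast_self (u : ZMod 2) : ((u.val : ℕ) : ZMod 2) = u := by revert u; decide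

theorem stmt_7 {F : Type*} [Field F] [Fintype F] [Algebra (ZMod 2) F] {f n : ℕ}
    (hcard : Fintype.card F = 2 ^ f)
    (b : Module.Basis (Fin f) (ZMod 2) F)
    (hb : ∀ i j, Algebra.trace (ZMod 2) F (b i * b j) = if i = j then 1 else 0)
    (φ : F → ZMod 4)
    (hφ : ∀ a, φ a = ∑ i, ((b.repr a i).val : ZMod 4))
    (C : Submodule F (Fin n → F)) :
    (∀ c ∈ C, (∑ i, c i) = 0 ∧
        ∑ p ∈ univ.filter (fun p : Fin n × Fin n => p.1 < p.2), c p.1 * c p.2 = 0)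
      ↔ (∀ c ∈ C, ∑ i, φ (c i) = 0) := by
  haveI : FiniteDimensional (ZMod 2) F := Module.Finite.of_basis b
  have hnd := traceForm_nondegenerate (ZMod 2) F
  -- rewrite the double ite-sum as QF of the pair sum
  have hpair : ∀ c : Fin n → F,
      (∑ i, ∑ j, if i < j then QF F (c i * c j) else 0)
        = QF F (∑ p ∈ univ.filter (fun p : Fin n × Fin n => p.1 < p.2), c p.1 * c p.2) := by
    intro c
    rw [map_sum, Finset.sum_filter, ← Finset.univ_product_univ, Finset.sum_product]
  have hkey : ∀ c : Fin n → F,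
      ∑ i, φ (c i) = φ (∑ i, c i)
        + QF F (∑ p ∈ univ.filter (fun p : Fin n × Fin n => p.1 < p.2), c p.1 * c p.2) := by
    intro c
    rw [key_sum b hb φ hφ c univ, hpair]
  constructor
  · intro h c hc
    obtain ⟨h1, h2⟩ := h c hc
    rw [hkey, h1, h2, phi_zero b hb φ hφ, map_zero, add_zero]
  · intro h c hc
    set S := ∑ p ∈ univ.filter (fun p : Fin n × Fin n => p.1 < p.2), c p.1 * c p.2 with hS
    set y := ∑ i, c i with hy
    have hall : ∀ α : F, φ (α * y) + QF F (α * α * S) = 0 := by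
      intro α
      have hmem : α • c ∈ C := C.smul_mem α hc
      have h0 := h (α • c) hmem
      rw [hkey] at h0
      have e1 : (∑ i, (α • c) i) = α * y := by
        simp [hy, Finset.mul_sum]
      have e2 : (∑ p ∈ univ.filter (fun p : Fin n × Fin n => p.1 < p.2),
          (α • c) p.1 * (α • c) p.2) = α * α * S := by
        rw [hS, Finset.mul_sum]
        refine Finset.sum_congr rfl fun p _ => ?_
        simp [Pi.smul_apply, smul_eq_mul]; ring
      rwa [e1, e2] at h0
    -- modulo 2 information: trace (z * B) where B = ∑ b i
    set B : F := ∑ i, b i with hB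
    have hmod : ∀ z : F,
        (ZMod.castHom (by norm_num : (2:ℕ) ∣ 4) (ZMod 2)) (φ z)
          = Algebra.trace (ZMod 2) F (z * B) := by
      intro z
      rw [hφ, map_sum, hB, Finset.mul_sum, map_sum]
      refine Finset.sum_congr rfl fun i _ => ?_
      rw [trace_mul_basis b hb, map_natCast, val_cast_self]
    have hQmod : ∀ z : F,
        (ZMod.castHom (by norm_num : (2:ℕ) ∣ 4) (ZMod 2)) (QF F z) = 0 := by
      intro z
      rw [QF_apply]
      generalize Algebra.trace (ZMod 2) F z = u
      revert u; decide
    -- Step 1 : y = 0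
    have hyB : y * B = 0 := by
      apply hnd.1
      intro α
      have h0 := congrArg (ZMod.castHom (by norm_num : (2:ℕ) ∣ 4) (ZMod 2)) (hall α)
      rw [map_add, hmod, hQmod, add_zero, map_zero] at h0
      have : Algebra.traceForm (ZMod 2) F (y * B) α
          = Algebra.trace (ZMod 2) F (α * y * B) := by
        simp [Algebra.traceForm_apply]; ring_nf
      rw [this]
      exact h0
    have hBne : B ≠ 0 := by
      have hf : f ≠ 0 := by
        intro hf0
        have : (1 : ℕ) < Fintype.card F := Fintype.one_lt_card
        rw [hcard, hf0, pow_zero] at this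
        exact absurd this (by norm_num)
      obtain ⟨i0⟩ : Nonempty (Fin f) := ⟨⟨0, Nat.pos_of_ne_zero hf⟩⟩
      intro hB0
      have : b.repr B i0 = 1 := by
        rw [hB, map_sum]
        simp [Module.Basis.repr_self, Finsupp.single_apply]
      rw [hB0] at this
      simp at this
    have hy0 : y = 0 := by
      rcases mul_eq_zero.mp hyB with h | h
      · exact h
      · exact absurd h hBne
    refine ⟨hy0, ?_⟩
    -- Step 2 : S = 0
    have htr : ∀ α : F, Algebra.trace (ZMod 2) F (α * α * S) = 0 := by
      intro α
      have h0 := hall α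
      rw [hy0, mul_zero, phi_zero b hb φ hφ, zero_add, QF_apply] at h0
      exact (q24_eq_zero_iff _).mp h0
    have hsq : Function.Surjective (fun x : F => x * x) := by
      have : CharP F 2 := charP_of_injective_algebraMap (algebraMap (ZMod 2) F).injective 2
      have := PerfectRing.ofFiniteOfIsReduced (p := 2) F
      intro v
      obtain ⟨x, hx⟩ := surjective_frobenius F 2 v
      exact ⟨x, by simpa [frobenius_def, sq] using hx⟩
    apply hnd.1
    intro β
    obtain ⟨α, hα⟩ := hsq β
    have := htr α
    rw [Algebra.traceForm_apply, mul_comm, ← hα]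
    simpa using this
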